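/- Fix V = 0, δ = 0, and 0 < A_− ≤ A_+, set λ_±(k) = λ(k; A_±), and define the reflection coefficient of the pure two-sided step initial condition ρ(k) = (iA_+/(λ_+(k) + k)) · ((λ_+(k) + k)·A_− − (λ_−(k) + k)·A_+) / ((λ_+(k) − k)·A_− + (λ_−(k) + k)·A_+) for k ∈ ℝ. Then: (i) if A_+ = A_−, ρ(k) = 0 for every k ∈ ℝ (the reflection coefficient vanishes identically); (ii) if A_+ ≠ A_−, then for k ∈ ℝ one has ρ(k) = 0 if and only if k = 0. Moreover, the denominator (λ_+(k) − k)·A_− + (λ_−(k) + k)·A_+ is nonzero for every k ∈ ℂ with Im k > 0 not lying on the segment i[−A_+, A_+] (no discrete eigenvalues). -/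

import Mathlib

/-- The argument of a complex number normalized to lie in `[−π/2, 3π/2)`:
if `arg z ∈ (−π, −π/2)` we add `2π`. -/
noncomputable def argS (z : ℂ) : ℝ :=
  if Complex.arg z < -(Real.pi / 2) then Complex.arg z + 2 * Real.pi else Complex.arg z

/-- The branch `λ(k;A) = √(r₁r₂)·exp(i(φ₁+φ₂)/2)` of `(k² + A²)^{1/2}`, where
`k − iA = r₁e^{iφ₁}`, `k + iA = r₂e^{iφ₂}` with `φ₁, φ₂ ∈ [−π/2, 3π/2)`;
its branch cut lies along the segment `i[−A,A]` and it is continuous from the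
right on the cut. -/
noncomputable def lamBr (A : ℝ) (k : ℂ) : ℂ :=
  ((Real.sqrt (‖k - Complex.I * (A : ℂ)‖ * ‖k + Complex.I * (A : ℂ)‖) : ℝ) : ℂ) *
    Complex.exp (Complex.I *
      (((argS (k - Complex.I * (A : ℂ)) + argS (k + Complex.I * (A : ℂ))) / 2 : ℝ) : ℂ))

lemma argS_spec (z : ℂ) : (‖z‖ : ℂ) * Complex.exp (Complex.I * (argS z : ℂ)) = z := by
  unfold argS
  split_ifs with h
  · push_cast
    rw [mul_add, Complex.exp_add]
    have h2 : Complex.exp (Complex.I * (2 * Real.pi)) = 1 := by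
      rw [mul_comm]; exact_mod_cast Complex.exp_two_pi_mul_I
    rw [h2, mul_one, mul_comm Complex.I]
    exact Complex.norm_mul_exp_arg_mul_I z
  · rw [mul_comm Complex.I]
    exact Complex.norm_mul_exp_arg_mul_I z

lemma lamBr_sq (A : ℝ) (k : ℂ) : lamBr A k ^ 2 = k ^ 2 + (A : ℂ) ^ 2 := by
  have h1 := argS_spec (k - Complex.I * (A : ℂ))
  have h2 := argS_spec (k + Complex.I * (A : ℂ))
  have key : lamBr A k ^ 2 = (k - Complex.I * (A : ℂ)) * (k + Complex.I * (A : ℂ)) := by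
    unfold lamBr
    rw [mul_pow, ← Complex.exp_nat_mul]
    have e1 : ((Real.sqrt (‖k - Complex.I * (A : ℂ)‖ * ‖k + Complex.I * (A : ℂ)‖) : ℝ) : ℂ) ^ 2
        = ((‖k - Complex.I * (A : ℂ)‖ : ℝ) : ℂ) * ((‖k + Complex.I * (A : ℂ)‖ : ℝ) : ℂ) := by
      norm_cast
      exact Real.sq_sqrt (mul_nonneg (norm_nonneg _) (norm_nonneg _))
    rw [e1]
    have e2 : ((2 : ℕ) : ℂ) * (Complex.I * (((argS (k - Complex.I * (A : ℂ)) + argS (k + Complex.I * (A : ℂ))) / 2 : ℝ) : ℂ))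
        = Complex.I * ((argS (k - Complex.I * (A : ℂ)) : ℝ) : ℂ) + Complex.I * ((argS (k + Complex.I * (A : ℂ)) : ℝ) : ℂ) := by
      push_cast; ring
    rw [e2, Complex.exp_add]
    calc _ = (((‖k - Complex.I * (A : ℂ)‖ : ℝ) : ℂ) * Complex.exp (Complex.I * ((argS (k - Complex.I * (A : ℂ)) : ℝ) : ℂ)))
        * (((‖k + Complex.I * (A : ℂ)‖ : ℝ) : ℂ) * Complex.exp (Complex.I * ((argS (k + Complex.I * (A : ℂ)) : ℝ) : ℂ))) := by ring
      _ = _ := by rw [h1, h2]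
  rw [key]
  have : Complex.I ^ 2 = -1 := Complex.I_sq
  linear_combination (-(A:ℂ)^2) * this

lemma lamBr_zero (A : ℝ) (hA : 0 < A) : lamBr A 0 = (A : ℂ) := by
  have hm : (0 : ℂ) - Complex.I * (A : ℂ) = (A : ℂ) * (-Complex.I) := by ring
  have hp : (0 : ℂ) + Complex.I * (A : ℂ) = (A : ℂ) * Complex.I := by ring
  have ha1 : Complex.arg ((0 : ℂ) - Complex.I * (A : ℂ)) = -(Real.pi / 2) := by
    rw [hm, Complex.arg_real_mul _ hA, Complex.arg_neg_I]
  have ha2 : Complex.arg ((0 : ℂ) + Complex.I * (A : ℂ)) = Real.pi / 2 := by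
    rw [hp, Complex.arg_real_mul _ hA, Complex.arg_I]
  have hs1 : argS ((0 : ℂ) - Complex.I * (A : ℂ)) = -(Real.pi / 2) := by
    unfold argS; rw [ha1]; simp
  have hs2 : argS ((0 : ℂ) + Complex.I * (A : ℂ)) = Real.pi / 2 := by
    unfold argS; rw [ha2]
    have : ¬ (Real.pi / 2 < -(Real.pi / 2)) := by
      have := Real.pi_pos; linarith
    simp [this]
  unfold lamBr
  rw [hs1, hs2]
  have habs : ‖(0:ℂ) - Complex.I * (A : ℂ)‖ = A := by
    rw [hm]; simp [abs_of_pos hA]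
  have habs2 : ‖(0:ℂ) + Complex.I * (A : ℂ)‖ = A := by
    rw [hp]; simp [abs_of_pos hA]
  rw [habs, habs2]
  have : Real.sqrt (A * A) = A := Real.sqrt_mul_self hA.le
  rw [this]
  simp

lemma lamBr_eq_zero {A : ℝ} {k : ℂ} (h : lamBr A k = 0) :
    k = Complex.I * (A : ℂ) ∨ k = -(Complex.I * (A : ℂ)) := by
  unfold lamBr at h
  rcases mul_eq_zero.mp h with h' | h'
  · have hs : Real.sqrt (‖k - Complex.I * (A : ℂ)‖ * ‖k + Complex.I * (A : ℂ)‖) = 0 := by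
      exact_mod_cast h'
    have := (Real.sqrt_eq_zero (mul_nonneg (norm_nonneg _) (norm_nonneg _))).mp hs
    rcases mul_eq_zero.mp this with h'' | h''
    · left
      have := norm_eq_zero.mp h''
      linear_combination this
    · right
      have := norm_eq_zero.mp h''
      linear_combination this
  · exact absurd h' (Complex.exp_ne_zero _)

lemma num_zero {Lp Lm k ap am : ℂ} (hLp : Lp ^ 2 = k ^ 2 + ap ^ 2)
    (hLm : Lm ^ 2 = k ^ 2 + am ^ 2) (hap : ap ≠ 0) (ham : am ≠ 0) (hne : ap ≠ am)
    (hN : (Lp + k) * am - (Lm + k) * ap = 0) : k = 0 := by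
  have key : (ap * am) * (ap * (Lm - k) - am * (Lp - k)) = 0 := by
    linear_combination (Lp - k) * (Lm - k) * hN - am * (Lm - k) * hLp + ap * (Lp - k) * hLm
  have h2 : ap * (Lm - k) - am * (Lp - k) = 0 := by
    rcases mul_eq_zero.mp key with h | h
    · exact absurd h (mul_ne_zero hap ham)
    · exact h
  have h3 : 2 * k * (am - ap) = 0 := by linear_combination hN + h2
  rcases mul_eq_zero.mp h3 with h | h
  · rcases mul_eq_zero.mp h with h | h
    · exact absurd h two_ne_zero
    · exact h
  · exact absurd (sub_eq_zero.mp h).symm hne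

lemma den_zero {Lp Lm k ap am : ℂ} (hLp : Lp ^ 2 = k ^ 2 + ap ^ 2)
    (hLm : Lm ^ 2 = k ^ 2 + am ^ 2) (hap : ap ≠ 0) (ham : am ≠ 0) (hk : k ≠ 0)
    (hD : (Lp - k) * am + (Lm + k) * ap = 0) : ap ^ 2 = am ^ 2 ∧ Lp + Lm = 0 := by
  have e1 : ap * ((Lm + k) * (Lp + k) + ap * am) = 0 := by
    linear_combination (Lp + k) * hD - am * hLp
  have e1' : (Lm + k) * (Lp + k) + ap * am = 0 := by
    rcases mul_eq_zero.mp e1 with h | h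
    · exact absurd h hap
    · exact h
  have e2 : am * ((Lp - k) * (Lm - k) + ap * am) = 0 := by
    linear_combination (Lm - k) * hD - ap * hLm
  have e2' : (Lp - k) * (Lm - k) + ap * am = 0 := by
    rcases mul_eq_zero.mp e2 with h | h
    · exact absurd h ham
    · exact h
  have e3 : 2 * k * (Lp + Lm) = 0 := by linear_combination e1' - e2'
  have hsum : Lp + Lm = 0 := by
    rcases mul_eq_zero.mp e3 with h | h
    · rcases mul_eq_zero.mp h with h | h
      · exact absurd h two_ne_zero
      · exact absurd h hk
    · exact h
  refine ⟨?_, hsum⟩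
  linear_combination hLm - hLp + (Lp - Lm) * hsum

/-- The reflection coefficient of the pure two-sided step initial condition with
`V = 0`, `δ = 0`:
`ρ(k) = (iA₊/(λ₊+k))·((λ₊+k)A₋ − (λ₋+k)A₊)/((λ₊−k)A₋ + (λ₋+k)A₊)` with
`λ± = λ(k;A±)`. -/
noncomputable def rhoStep (Am Ap : ℝ) (k : ℂ) : ℂ :=
  (Complex.I * (Ap : ℂ) / (lamBr Ap k + k)) *
    ((lamBr Ap k + k) * (Am : ℂ) - (lamBr Am k + k) * (Ap : ℂ)) /
    ((lamBr Ap k - k) * (Am : ℂ) + (lamBr Am k + k) * (Ap : ℂ))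

/-- For `V = 0`, `δ = 0`, `0 < A₋ ≤ A₊`: (i) if `A₊ = A₋` then `ρ(k) = 0` for every
real `k`; (ii) if `A₊ ≠ A₋` then for real `k`, `ρ(k) = 0` iff `k = 0`.  Moreover the
denominator `(λ₊(k)−k)A₋ + (λ₋(k)+k)A₊` is nonzero for every `k` in the open upper
half plane not lying on `i[−A₊, A₊]` (no discrete eigenvalues). -/
theorem step_reflection_zero_velocity (Am Ap : ℝ) (hm : 0 < Am) (hmp : Am ≤ Ap) :
    (Ap = Am → ∀ k : ℝ, rhoStep Am Ap (k : ℂ) = 0) ∧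
    (Ap ≠ Am → ∀ k : ℝ, (rhoStep Am Ap (k : ℂ) = 0 ↔ k = 0)) ∧
    (∀ k : ℂ, 0 < k.im → ¬(k.re = 0 ∧ |k.im| ≤ Ap) →
      (lamBr Ap k - k) * (Am : ℂ) + (lamBr Am k + k) * (Ap : ℂ) ≠ 0) := by
  have hp : 0 < Ap := lt_of_lt_of_le hm hmp
  have hapC : (Ap : ℂ) ≠ 0 := Complex.ofReal_ne_zero.mpr hp.ne'
  have hamC : (Am : ℂ) ≠ 0 := Complex.ofReal_ne_zero.mpr hm.ne'
  refine ⟨?_, ?_, ?_⟩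
  · intro h k; subst h; simp [rhoStep]
  · intro hne k
    constructor
    · intro hρ
      by_contra hk0
      have hkC : (k : ℂ) ≠ 0 := Complex.ofReal_ne_zero.mpr hk0
      have hLp := lamBr_sq Ap (k : ℂ)
      have hLm := lamBr_sq Am (k : ℂ)
      unfold rhoStep at hρ
      rcases div_eq_zero_iff.mp hρ with h | hD
      · rcases mul_eq_zero.mp h with h | hN
        · rcases div_eq_zero_iff.mp h with h | h
          · exact (mul_ne_zero Complex.I_ne_zero hapC) h
          · have h2 : (Ap : ℂ) ^ 2 = 0 := by
              linear_combination (lamBr Ap (k:ℂ) - (k:ℂ)) * h - hLp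
            exact hapC (pow_eq_zero_iff two_ne_zero |>.mp h2)
        · have hneC : (Ap : ℂ) ≠ (Am : ℂ) := fun hh => hne (Complex.ofReal_injective hh)
          exact hkC (num_zero hLp hLm hapC hamC hneC hN)
      · obtain ⟨hsq, _⟩ := den_zero hLp hLm hapC hamC hkC hD
        have h2 : Ap ^ 2 = Am ^ 2 := by exact_mod_cast hsq
        have : Ap = Am := by nlinarith [sq_nonneg (Ap - Am), sq_nonneg (Ap + Am)]
        exact hne this
    · intro hk; subst hk
      unfold rhoStep
      push_cast
      rw [lamBr_zero Ap hp, lamBr_zero Am hm]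
      simp [mul_comm]
  · intro k him hseg hD
    have hkC : k ≠ 0 := by intro h; rw [h] at him; simp at him
    have hLp := lamBr_sq Ap k
    have hLm := lamBr_sq Am k
    obtain ⟨hsq, hsum⟩ := den_zero hLp hLm hapC hamC hkC hD
    have h2 : Ap ^ 2 = Am ^ 2 := by exact_mod_cast hsq
    have hAe : Ap = Am := by nlinarith [sq_nonneg (Ap - Am), sq_nonneg (Ap + Am)]
    rw [hAe] at hsum
    have hL0 : lamBr Am k = 0 := by
      rcases mul_eq_zero.mp (show (2 : ℂ) * lamBr Am k = 0 by linear_combination hsum) with h | h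
      · exact absurd h two_ne_zero
      · exact h
    have hL0' : lamBr Ap k = 0 := by rw [hAe]; exact hL0
    rcases lamBr_eq_zero hL0' with h | h
    · apply hseg
      rw [h]
      constructor
      · simp
      · simp [abs_of_pos hp]
    · rw [h] at him
      simp at him
      linarith
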